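/- Let Ω ⊂ ℂ be a finely open set and let z ∈ Ω. Then there exists a compact set K ⊂ Ω which is a fine neighborhood of z (i.e., K contains a finely open set containing z). -/

import Mathlib

open MeasureTheory Set ENNReal

/-- The truncation of an extended real number to `ℝ≥0∞`. -/
noncomputable def erealToENNReal (x : EReal) : ℝ≥0∞ :=
  if x = ⊤ then ⊤ else ENNReal.ofReal x.toReal

/-- The (upper) integral of an `EReal`-valued function over a set of reals,
computed as the difference of the `lintegral`s of the positive and negative parts. -/
noncomputable def erealSetIntegral (s : Set ℝ) (g : ℝ → EReal) : EReal :=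
  ((∫⁻ θ in s, erealToENNReal (g θ) : ℝ≥0∞) : EReal)
    - ((∫⁻ θ in s, erealToENNReal (-(g θ)) : ℝ≥0∞) : EReal)

/-- `u` is plurisubharmonic on `U ⊆ ℂⁿ`: it takes values in `[-∞, ∞)`, is upper
semicontinuous on `U`, and satisfies the sub-mean value inequality over every circle
(in every complex line) whose corresponding closed disc lies in `U`. -/
def PSHOn (n : ℕ) (U : Set (Fin n → ℂ)) (u : (Fin n → ℂ) → EReal) : Prop :=
  (∀ z ∈ U, u z < ⊤) ∧ UpperSemicontinuousOn u U ∧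
  ∀ a b : Fin n → ℂ, ∀ r : ℝ, 0 < r →
    (∀ t : ℂ, ‖t‖ ≤ r → a + t • b ∈ U) →
    ((2 * Real.pi : ℝ) : EReal) * u a ≤
      erealSetIntegral (Set.Ioc 0 (2 * Real.pi))
        (fun θ => u (a + ((r : ℂ) * Complex.exp ((θ : ℂ) * Complex.I)) • b))

/-- A set `P ⊆ ℂⁿ` is pluripolar if there is a plurisubharmonic function on `ℂⁿ`,
not identically `-∞`, which is `-∞` on `P`. -/
def Pluripolar (n : ℕ) (P : Set (Fin n → ℂ)) : Prop :=
  ∃ u : (Fin n → ℂ) → EReal, PSHOn n Set.univ u ∧ (∃ z, u z ≠ ⊥) ∧ ∀ z ∈ P, u z = ⊥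

/-- `L ⊆ ℂⁿ` is thin at `z₀`: there are a neighborhood `U` of `z₀` and a negative
plurisubharmonic function `u` on `U` with `u ≤ -1` on `(L \ {z₀}) ∩ U` and `u z₀ > -1/4`. -/
def ThinAtCn (n : ℕ) (L : Set (Fin n → ℂ)) (z₀ : Fin n → ℂ) : Prop :=
  ∃ U : Set (Fin n → ℂ), IsOpen U ∧ z₀ ∈ U ∧
    ∃ u : (Fin n → ℂ) → EReal, PSHOn n U u ∧ (∀ z ∈ U, u z < 0) ∧
      (∀ z ∈ (L \ {z₀}) ∩ U, u z ≤ ((-1 : ℝ) : EReal)) ∧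
      ((-(1 / 4 : ℝ) : ℝ) : EReal) < u z₀

/-- `M ⊆ ℂⁿ` is a maximal totally real submanifold of class `C^k`: near each of its
points it is the image of a `C^k` embedding of an open subset of `ℝⁿ` whose differential
is injective and whose tangent space (the range of the differential) contains no
complex line. -/
def MaximalTotallyReal (n : ℕ) (k : ℕ∞) (M : Set (Fin n → ℂ)) : Prop :=
  ∀ z ∈ M, ∃ (U : Set (Fin n → ℂ)) (V : Set (Fin n → ℝ))
      (φ : (Fin n → ℝ) → (Fin n → ℂ)) (x : Fin n → ℝ),
    IsOpen U ∧ z ∈ U ∧ IsOpen V ∧ x ∈ V ∧ φ x = z ∧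
    ContDiffOn ℝ k φ V ∧ Set.InjOn φ V ∧ M ∩ U = φ '' V ∧
    (∀ y ∈ V, Function.Injective (fderivWithin ℝ φ V y)) ∧
    (∀ y ∈ V, ∀ w : Fin n → ℂ, w ∈ Set.range (fderivWithin ℝ φ V y) → w ≠ 0 →
      (fun j => Complex.I * w j) ∉ Set.range (fderivWithin ℝ φ V y))

/-- `u` is subharmonic on `U ⊆ ℂ`: values in `[-∞, ∞)`, upper semicontinuous, and the
sub-mean value inequality holds over every circle whose closed disc lies in `U`. -/
def SubharmonicOnC (U : Set ℂ) (u : ℂ → EReal) : Prop :=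
  (∀ z ∈ U, u z < ⊤) ∧ UpperSemicontinuousOn u U ∧
  ∀ a : ℂ, ∀ r : ℝ, 0 < r → (∀ t : ℂ, ‖t‖ ≤ r → a + t ∈ U) →
    ((2 * Real.pi : ℝ) : EReal) * u a ≤
      erealSetIntegral (Set.Ioc 0 (2 * Real.pi))
        (fun θ => u (a + (r : ℂ) * Complex.exp ((θ : ℂ) * Complex.I)))

/-- `F ⊆ ℂ` is thin at `z₀`: there is a subharmonic function `u` on `ℂ` with
`u ≤ -1` on `F` and `u z₀ > -1`. -/
def ThinAtC (F : Set ℂ) (z₀ : ℂ) : Prop :=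
  ∃ u : ℂ → EReal, SubharmonicOnC Set.univ u ∧
    (∀ z ∈ F, u z ≤ ((-1 : ℝ) : EReal)) ∧ ((-1 : ℝ) : EReal) < u z₀

/-- The fine topology on `ℂ`: the coarsest topology making all subharmonic
functions on `ℂ` continuous. -/
noncomputable def fineTopology : TopologicalSpace ℂ :=
  ⨅ u ∈ {u : ℂ → EReal | SubharmonicOnC Set.univ u},
    TopologicalSpace.induced u inferInstance

/-- `f` is finely holomorphic on the finely open set `D`: every point of `D` has a
compact fine neighborhood `K ⊆ D` on which `f` is a uniform limit of rational
functions with poles off `K`. -/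
def FinelyHolomorphicOn (D : Set ℂ) (f : ℂ → ℂ) : Prop :=
  ∀ z ∈ D, ∃ K : Set ℂ, IsCompact K ∧ K ⊆ D ∧
    (∃ V : Set ℂ, @IsOpen ℂ fineTopology V ∧ z ∈ V ∧ V ⊆ K) ∧
    ∀ ε : ℝ, 0 < ε → ∃ p q : Polynomial ℂ,
      (∀ w ∈ K, q.eval w ≠ 0) ∧ ∀ w ∈ K, ‖f w - p.eval w / q.eval w‖ ≤ ε

/-- The Wirtinger derivative `∂f/∂z̄` of `f : ℂ → ℂ` at `z`. -/
noncomputable def dbar (f : ℂ → ℂ) (z : ℂ) : ℂ :=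
  (fderiv ℝ f z 1 + Complex.I * fderiv ℝ f z Complex.I) / 2

/-- The graph of `f` over `E ⊆ ℂ`, as a subset of `ℂ²`. -/
def graphOn (f : ℂ → ℂ) (E : Set ℂ) : Set (Fin 2 → ℂ) :=
  (fun z => ![z, f z]) '' E

lemma my_coe_toReal {x : ℝ≥0∞} (hx : x ≠ ⊤) : ((x.toReal : ℝ) : EReal) = (x : EReal) := by
  conv_rhs => rw [← ENNReal.ofReal_toReal hx]
  rw [EReal.coe_ennreal_ofReal, max_eq_left ENNReal.toReal_nonneg]

lemma erealSetIntegral_coe (s : Set ℝ) (f : ℝ → ℝ) (hf : IntegrableOn f s) :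
    erealSetIntegral s (fun θ => ((f θ : ℝ) : EReal)) = (((∫ θ in s, f θ) : ℝ) : EReal) := by
  have h1 : ∀ θ : ℝ, erealToENNReal ((f θ : ℝ) : EReal) = ENNReal.ofReal (f θ) := by
    intro θ; simp [erealToENNReal, EReal.coe_ne_top]
  have h2 : ∀ θ : ℝ, erealToENNReal (-((f θ : ℝ) : EReal)) = ENNReal.ofReal (-(f θ)) := by
    intro θ; rw [← EReal.coe_neg]; simp [erealToENNReal, EReal.coe_ne_top]
  have hA : (∫⁻ θ in s, ENNReal.ofReal (f θ)) ≠ ⊤ :=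
    ((lintegral_ofReal_le_lintegral_enorm f).trans_lt hf.2).ne
  have hB : (∫⁻ θ in s, ENNReal.ofReal (-(f θ))) ≠ ⊤ :=
    ((lintegral_ofReal_le_lintegral_enorm _).trans_lt hf.neg.2).ne
  have heq := integral_eq_lintegral_pos_part_sub_lintegral_neg_part hf
  simp only [erealSetIntegral, h1, h2]
  rw [← my_coe_toReal hA, ← my_coe_toReal hB, ← EReal.coe_sub, ← heq]

lemma subharmonic_linear (μ : ℂ) :
    SubharmonicOnC Set.univ (fun w => (((μ * w).re : ℝ) : EReal)) := by
  refine ⟨fun w _ => EReal.coe_lt_top _, ?_, ?_⟩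
  · have : Continuous fun w : ℂ => (((μ * w).re : ℝ) : EReal) :=
      continuous_coe_real_ereal.comp (Complex.continuous_re.comp (continuous_const.mul continuous_id))
    exact this.upperSemicontinuous.upperSemicontinuousOn _
  · intro a r hr _
    have hfeq : ∀ θ : ℝ, (μ * (a + (r : ℂ) * Complex.exp ((θ : ℂ) * Complex.I))).re
        = (μ * a).re + r * (μ.re * Real.cos θ - μ.im * Real.sin θ) := by
      intro θ
      have : (Complex.exp ((θ : ℂ) * Complex.I)).re = Real.cos θ := Complex.exp_ofReal_mul_I_re θ
      have him : (Complex.exp ((θ : ℂ) * Complex.I)).im = Real.sin θ := Complex.exp_ofReal_mul_I_im θ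
      simp [mul_add, Complex.add_re, Complex.mul_re, Complex.ofReal_re, Complex.ofReal_im, this, him]
      ring
    have hcont : Continuous fun θ : ℝ =>
        (μ * a).re + r * (μ.re * Real.cos θ - μ.im * Real.sin θ) := by continuity
    have hint : IntegrableOn
        (fun θ : ℝ => (μ * (a + (r : ℂ) * Complex.exp ((θ : ℂ) * Complex.I))).re)
        (Set.Ioc 0 (2 * Real.pi)) := by
      simp only [hfeq]
      exact hcont.integrableOn_Ioc
    have key := erealSetIntegral_coe (Set.Ioc 0 (2 * Real.pi)) _ hint
    rw [key]
    have hval : (∫ θ in Set.Ioc 0 (2 * Real.pi),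
        (μ * (a + (r : ℂ) * Complex.exp ((θ : ℂ) * Complex.I))).re) = 2 * Real.pi * (μ * a).re := by
      rw [← intervalIntegral.integral_of_le (by positivity : (0:ℝ) ≤ 2 * Real.pi)]
      simp only [hfeq]
      rw [intervalIntegral.integral_add (intervalIntegrable_const)
        ((by fun_prop : Continuous fun x : ℝ => r * (μ.re * Real.cos x - μ.im * Real.sin x)).intervalIntegrable _ _)]
      rw [intervalIntegral.integral_const_mul]
      rw [intervalIntegral.integral_sub
        ((by fun_prop : Continuous fun x : ℝ => μ.re * Real.cos x).intervalIntegrable _ _)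
        ((by fun_prop : Continuous fun x : ℝ => μ.im * Real.sin x).intervalIntegrable _ _)]
      rw [intervalIntegral.integral_const_mul, intervalIntegral.integral_const_mul,
        integral_cos, integral_sin]
      simp [Real.sin_two_pi, Real.cos_two_pi]
      ring
    rw [hval, ← EReal.coe_mul]


lemma fine_le {u : ℂ → EReal} (hu : SubharmonicOnC Set.univ u) :
    fineTopology ≤ TopologicalSpace.induced u inferInstance :=
  iInf₂_le u hu

lemma isOpen_fine_preimage {u : ℂ → EReal} (hu : SubharmonicOnC Set.univ u)
    {O : Set EReal} (hO : IsOpen O) : @IsOpen ℂ fineTopology (u ⁻¹' O) := by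
  exact (isOpen_induced (t := inferInstance) (f := u) hO).mono (fine_le hu)

/-- **Lemma.** Every point of a finely open set `Ω ⊆ ℂ` has a compact subset of `Ω`
as a fine neighborhood. -/
theorem compact_fine_neighborhood (Ω : Set ℂ) (hΩ : @IsOpen ℂ fineTopology Ω)
    (z : ℂ) (hz : z ∈ Ω) :
    ∃ K : Set ℂ, IsCompact K ∧ K ⊆ Ω ∧
      ∃ V : Set ℂ, @IsOpen ℂ fineTopology V ∧ z ∈ V ∧ V ⊆ K := by
  classical
  set S := {u : ℂ → EReal | SubharmonicOnC Set.univ u} with hS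
  have h1 : fineTopology = ⨅ u : S, TopologicalSpace.induced (u : ℂ → EReal) inferInstance := by
    rw [fineTopology]; exact iInf_subtype'
  have hmem : Ω ∈ @nhds ℂ fineTopology z := by
    letI := fineTopology; exact hΩ.mem_nhds hz
  rw [h1, nhds_iInf] at hmem
  simp only [nhds_induced] at hmem
  rw [Filter.mem_iInf] at hmem
  obtain ⟨I, hIfin, V, hV, hΩeq⟩ := hmem
  haveI : Finite ↥I := hIfin.to_subtype
  have hzV : ∀ i : I, z ∈ V i := by
    intro i
    have : z ∈ ⋂ i, V i := hΩeq ▸ hz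
    exact Set.mem_iInter.mp this i
  -- per-index data
  have key : ∀ i : I, ∃ (O C : Set ℂ) (b : EReal),
      @IsOpen ℂ fineTopology O ∧ IsClosed C ∧ z ∈ O ∧ O ⊆ C ∧
      ((i : S) : ℂ → EReal) z < b ∧
      ∀ w, w ∈ C → ((i : S) : ℂ → EReal) w < b → w ∈ V i := by
    intro i
    set u : ℂ → EReal := ((i : S) : ℂ → EReal) with hu
    have hsub : SubharmonicOnC Set.univ u := (i : S).2
    have husc : UpperSemicontinuous u := upperSemicontinuousOn_univ_iff.mp hsub.2.1
    obtain ⟨W, hW, hWV⟩ := Filter.mem_comap.mp (hV i)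
    have hxtop : u z < ⊤ := hsub.1 z (Set.mem_univ z)
    by_cases hx : u z = ⊥
    · obtain ⟨b, hb, hIb⟩ := exists_Ico_subset_of_mem_nhds hW ⟨⊤, hxtop⟩
      refine ⟨Set.univ, Set.univ, b, @isOpen_univ ℂ fineTopology,
        isClosed_univ, Set.mem_univ z, subset_rfl, hb, fun w _ hw => ?_⟩
      exact hWV (hIb ⟨hx.trans_le bot_le, hw⟩)
    · obtain ⟨b, hb, hIb⟩ := exists_Ico_subset_of_mem_nhds hW ⟨⊤, hxtop⟩
      obtain ⟨l, hl, hIl⟩ := exists_Ioc_subset_of_mem_nhds hW ⟨⊥, Ne.bot_lt hx⟩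
      obtain ⟨a', ha1, ha2⟩ := exists_between hl
      refine ⟨u ⁻¹' Set.Ioi a', u ⁻¹' Set.Ici a',
        b, isOpen_fine_preimage hsub isOpen_Ioi, ?_, ha2,
        Set.preimage_mono Set.Ioi_subset_Ici_self,
        hb, fun w hwC hwb => ?_⟩
      · have : u ⁻¹' Set.Ici a' = (u ⁻¹' Set.Iio a')ᶜ := by
          ext w; simp [not_lt]
        rw [this]
        exact (upperSemicontinuous_iff_isOpen_preimage.mp husc a').isClosed_compl
      · rcases le_or_gt (u w) (u z) with hcase | hcase
        · exact hWV (hIl ⟨lt_of_lt_of_le ha1 hwC, hcase⟩)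
        · exact hWV (hIb ⟨le_of_lt hcase, hwb⟩)
  choose O C b hO hC hzO hOC hb hprop using key
  -- Euclidean-open superlevel control
  have husc : ∀ i : I, UpperSemicontinuous (((i : S) : ℂ → EReal)) := fun i =>
    upperSemicontinuousOn_univ_iff.mp ((i : S).2).2.1
  set G : Set ℂ := ⋂ i : I, {w : ℂ | ((i : S) : ℂ → EReal) w < b i} with hG
  have hGopen : IsOpen G :=
    isOpen_iInter_of_finite fun i => upperSemicontinuous_iff_isOpen_preimage.mp (husc i) (b i)
  have hzG : z ∈ G := Set.mem_iInter.mpr fun i => hb i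
  obtain ⟨ε, hε, hball⟩ := Metric.isOpen_iff.mp hGopen z hzG
  set ρ : ℝ := ε / 2 with hρ
  have hρpos : 0 < ρ := by positivity
  have hcb : Metric.closedBall z ρ ⊆ G := fun w hw =>
    hball (Metric.closedBall_subset_ball (show ρ < ε by rw [hρ]; linarith) hw)
  set δ : ℝ := ρ / 2 with hδ
  have hδpos : 0 < δ := by positivity
  -- the square
  set L : ℂ → ℂ → EReal := fun μ w => (((μ * w).re : ℝ) : EReal) with hL
  have hLs : ∀ μ, SubharmonicOnC Set.univ (L μ) := fun μ => subharmonic_linear μ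
  set sqO : Set ℂ := ⋂ μ ∈ ({1, -1, Complex.I, -Complex.I} : Set ℂ),
    (L μ) ⁻¹' Set.Iio ((((μ * z).re + δ : ℝ) : EReal)) with hsqO
  set sqC : Set ℂ := ⋂ μ ∈ ({1, -1, Complex.I, -Complex.I} : Set ℂ),
    {w : ℂ | (μ * w).re ≤ (μ * z).re + δ} with hsqC
  have hsqOopen : @IsOpen ℂ fineTopology sqO := by
    rw [hsqO]
    letI := fineTopology
    refine (Set.toFinite _).isOpen_biInter fun μ _ =>
      isOpen_fine_preimage (hLs μ) isOpen_Iio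
  have hzsqO : z ∈ sqO := by
    rw [hsqO]
    refine Set.mem_iInter₂.mpr fun μ _ => ?_
    simp only [Set.mem_preimage, Set.mem_Iio, hL]
    exact_mod_cast (by linarith : (μ * z).re < (μ * z).re + δ)
  have hsqOC : sqO ⊆ sqC := by
    rw [hsqO, hsqC]
    refine Set.iInter₂_mono fun μ _ => fun w hw => ?_
    simp only [Set.mem_preimage, Set.mem_Iio, hL] at hw
    exact le_of_lt (by exact_mod_cast hw)
  have hsqCclosed : IsClosed sqC := by
    rw [hsqC]
    exact isClosed_biInter fun μ _ => isClosed_le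
      (Complex.continuous_re.comp (continuous_const.mul continuous_id)) continuous_const
  have hsqCball : sqC ⊆ Metric.closedBall z ρ := by
    intro w hw
    rw [hsqC] at hw
    have h1 := Set.mem_iInter₂.mp hw 1 (by simp)
    have h2 := Set.mem_iInter₂.mp hw (-1) (by simp)
    have h3 := Set.mem_iInter₂.mp hw Complex.I (by simp)
    have h4 := Set.mem_iInter₂.mp hw (-Complex.I) (by simp)
    simp only [Set.mem_setOf_eq, one_mul, neg_mul, Complex.neg_re] at h1 h2 h3 h4
    have hre : |(w - z).re| ≤ δ := by
      rw [abs_le, Complex.sub_re]; constructor <;> linarith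
    have him : |(w - z).im| ≤ δ := by
      have hIw : (Complex.I * w).re = -w.im := by simp [Complex.mul_re]
      have hIz : (Complex.I * z).re = -z.im := by simp [Complex.mul_re]
      rw [hIw, hIz] at h3 h4
      rw [abs_le, Complex.sub_im]; constructor <;> linarith
    have : ‖w - z‖ ≤ δ + δ :=
      le_trans (Complex.norm_le_abs_re_add_abs_im _) (add_le_add hre him)
    rw [Metric.mem_closedBall, Complex.dist_eq]
    calc ‖w - z‖ ≤ δ + δ := this
      _ = ρ := by rw [hδ]; ring
  -- assemble
  refine ⟨sqC ∩ ⋂ i : I, C i, ?_, ?_, sqO ∩ ⋂ i : I, O i, ?_, ?_, ?_⟩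
  · refine (isCompact_closedBall z ρ).of_isClosed_subset
      (hsqCclosed.inter (isClosed_iInter hC)) ?_
    exact (Set.inter_subset_left).trans hsqCball
  · intro w hw
    have hwG : w ∈ G := hcb (hsqCball hw.1)
    have : ∀ i : I, w ∈ V i := fun i =>
      hprop i w (Set.mem_iInter.mp hw.2 i) (Set.mem_iInter.mp hwG i)
    rw [hΩeq]
    exact Set.mem_iInter.mpr this
  · letI := fineTopology
    exact hsqOopen.inter (isOpen_iInter_of_finite hO)
  · exact ⟨hzsqO, Set.mem_iInter.mpr hzO⟩
  · exact Set.inter_subset_inter hsqOC (Set.iInter_mono hOC)
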